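/- Let A be a left noetherian ring, N a finitely generated left A-module, and {M_α}_{α∈I} a family of left A-modules of uniformly bounded injective dimension. Then for every i ≥ 0 the natural map ⊕_{α∈I} Ext^i_A(N, M_α) → Ext^i_A(N, ⊕_{α∈I} M_α) is an isomorphism. -/

import Mathlib

open CategoryTheory

/-- The `i`-th Ext group of two left `A`-modules, as a type. -/
noncomputable abbrev extType (A : Type) [Ring A] (i : ℕ) (M N : ModuleCat.{0} A) : Type :=
  ((Ext ℤ (ModuleCat.{0} A) i).obj (Opposite.op M)).obj N

/-- The injective dimension of a left `A`-module, with value in `ℕ∞`,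
defined via vanishing of Ext groups. -/
noncomputable def injDim (A : Type) [Ring A] (M : ModuleCat.{0} A) : ℕ∞ :=
  sInf {n : ℕ∞ | ∀ (N : ModuleCat.{0} A) (i : ℕ), n < (i : ℕ∞) → Subsingleton (extType A i N M)}

/-! ### Auxiliary material -/

noncomputable section ExtDirectSumAux

/-! #### Generalities on direct sums -/

section DS

variable {I : Type} [DecidableEq I] {β : I → Type} [∀ i, AddCommMonoid (β i)]

lemma myDS_exists_support (x : DirectSum I β) : ∃ s : Finset I, ∀ i ∉ s, x i = 0 := by
  refine DirectSum.induction_on x ⟨∅, fun _ _ => rfl⟩ (fun j y => ⟨{j}, fun i hi => ?_⟩) ?_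
  · exact DirectSum.of_eq_of_ne _ _ _ (fun h => hi (by simp [h]))
  · rintro a b ⟨s, hs⟩ ⟨t, ht⟩
    refine ⟨s ∪ t, fun i hi => ?_⟩
    rw [DirectSum.add_apply, hs i (fun h => hi (Finset.mem_union_left _ h)),
      ht i (fun h => hi (Finset.mem_union_right _ h)), add_zero]

lemma myDS_sum_of_apply (s : Finset I) (v : ∀ j : I, β j) (i : I) :
    (∑ j ∈ s, DirectSum.of β j (v j)) i = if i ∈ s then v i else 0 := by
  induction s using Finset.induction_on with
  | empty => simp
  | @insert j s hj ih =>
    rw [Finset.sum_insert hj, DirectSum.add_apply, ih]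
    by_cases hij : i = j
    · subst hij
      rw [DirectSum.of_eq_same, if_neg hj, add_zero, if_pos (Finset.mem_insert_self _ _)]
    · rw [DirectSum.of_eq_of_ne _ _ _ hij, zero_add]
      by_cases his : i ∈ s
      · rw [if_pos his, if_pos (Finset.mem_insert_of_mem his)]
      · rw [if_neg his, if_neg (fun h => (Finset.mem_insert.1 h).elim hij his)]

lemma myDS_eq_sum_of (x : DirectSum I β) (s : Finset I) (h : ∀ i ∉ s, x i = 0) :
    x = ∑ j ∈ s, DirectSum.of β j (x j) := by
  apply DFinsupp.ext
  intro i
  rw [myDS_sum_of_apply]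
  by_cases hi : i ∈ s
  · rw [if_pos hi]
  · rw [if_neg hi, h i hi]

end DS

/-! #### Finitely generated modules mapping into direct sums -/

section Decomp

variable {A : Type} [Ring A] {I : Type} [DecidableEq I] (M : I → ModuleCat.{0} A)

lemma myDS_exists_finset_comp {F : Type} [AddCommGroup F] [Module A F] [Module.Finite A F]
    (φ : F →ₗ[A] DirectSum I (fun α => (M α : Type))) :
    ∃ s : Finset I, ∀ x : F, ∀ j ∉ s, (φ x) j = 0 := by
  obtain ⟨t, ht⟩ : (⊤ : Submodule A F).FG := Module.finite_def.mp inferInstance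
  choose σ hσ using fun y : F => myDS_exists_support (φ y)
  refine ⟨t.sup σ, fun x j hj => ?_⟩
  have hx : x ∈ Submodule.span A (t : Set F) := by rw [ht]; trivial
  induction hx using Submodule.span_induction with
  | mem y hy =>
    exact hσ y j (fun h => hj (Finset.le_sup (f := σ) hy h))
  | zero => rw [map_zero]; rfl
  | add a b _ _ iha ihb => rw [map_add, DirectSum.add_apply, iha, ihb, add_zero]
  | smul a y _ ihy =>
    rw [map_smul]
    have : (a • φ y) j = a • ((φ y) j) := DFinsupp.smul_apply _ _ _
    rw [this, ihy, smul_zero]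

lemma myDS_decompose {F : Type} [AddCommGroup F] [Module A F] [Module.Finite A F]
    (φ : F →ₗ[A] DirectSum I (fun α => (M α : Type))) :
    ∃ s : Finset I, (∀ x : F, ∀ j ∉ s, (φ x) j = 0) ∧
      φ = ∑ j ∈ s, (DirectSum.lof A I (fun α => (M α : Type)) j).comp
        ((DFinsupp.lapply j).comp φ) := by
  obtain ⟨s, hs⟩ := myDS_exists_finset_comp M φ
  refine ⟨s, hs, ?_⟩
  apply LinearMap.ext
  intro x
  rw [LinearMap.sum_apply]
  have := myDS_eq_sum_of (φ x) s (hs x)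
  rw [this]
  apply Finset.sum_congr rfl
  intro j _
  rw [LinearMap.comp_apply, LinearMap.comp_apply, DirectSum.lof_eq_of, DFinsupp.lapply_apply]

end Decomp

/-! #### A finite free resolution -/

section Resolution

variable (A : Type) [Ring A] [IsNoetherianRing A]

def ffcover (X : ModuleCat.{0} A) (hX : Module.Finite A X) :
    Σ' (F : ModuleCat.{0} A) (p : F ⟶ X),
      Module.Finite A F ∧ Projective F ∧ Function.Surjective p :=
  ⟨ModuleCat.of A (Fin (Module.Finite.exists_fin' A X).choose → A),
    ModuleCat.ofHom (Module.Finite.exists_fin' A X).choose_spec.choose,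
    inferInstanceAs (Module.Finite A (Fin _ → A)),
    (IsProjective.iff_projective _).mp inferInstance,
    (Module.Finite.exists_fin' A X).choose_spec.choose_spec⟩

def tower (N : ModuleCat.{0} A) (hN : Module.Finite A N) :
    ℕ → Σ' (K : ModuleCat.{0} A) (_ : Module.Finite A K) (F : ModuleCat.{0} A) (p : F ⟶ K),
      Module.Finite A F ∧ Projective F ∧ Function.Surjective p
  | 0 => ⟨N, hN, (ffcover A N hN).1, (ffcover A N hN).2.1, (ffcover A N hN).2.2.1,
      (ffcover A N hN).2.2.2.1, (ffcover A N hN).2.2.2.2⟩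
  | (n+1) =>
      let t := tower N hN n
      have hF : Module.Finite A t.2.2.1 := t.2.2.2.2.1
      have : IsNoetherian A t.2.2.1 := isNoetherian_of_isNoetherianRing_of_finite A _
      let K : ModuleCat.{0} A := ModuleCat.of A (LinearMap.ker t.2.2.2.1.hom)
      have hK : Module.Finite A K :=
        Module.Finite.iff_fg.mpr (IsNoetherian.noetherian _)
      ⟨K, hK, (ffcover A K hK).1, (ffcover A K hK).2.1, (ffcover A K hK).2.2.1,
        (ffcover A K hK).2.2.2.1, (ffcover A K hK).2.2.2.2⟩

variable (N : ModuleCat.{0} A) (hN : Module.Finite A N)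

abbrev resF (n : ℕ) : ModuleCat.{0} A := (tower A N hN n).2.2.1
abbrev resK (n : ℕ) : ModuleCat.{0} A := (tower A N hN n).1
abbrev resp (n : ℕ) : resF A N hN n ⟶ resK A N hN n := (tower A N hN n).2.2.2.1

lemma resp_surj (n : ℕ) : Function.Surjective (resp A N hN n) := (tower A N hN n).2.2.2.2.2.2
instance resF_fin (n : ℕ) : Module.Finite A (resF A N hN n) := (tower A N hN n).2.2.2.2.1
instance resF_proj (n : ℕ) : Projective (resF A N hN n) := (tower A N hN n).2.2.2.2.2.1

def incl (n : ℕ) : resK A N hN (n+1) ⟶ resF A N hN n :=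
  ModuleCat.ofHom (LinearMap.ker (resp A N hN n).hom).subtype

lemma incl_resp (n : ℕ) : incl A N hN n ≫ resp A N hN n = 0 := by
  apply ModuleCat.hom_ext
  apply LinearMap.ext
  intro y
  exact y.2

def resd (n : ℕ) : resF A N hN (n+1) ⟶ resF A N hN n :=
  resp A N hN (n+1) ≫ incl A N hN n

lemma resd_resp (n : ℕ) : resd A N hN n ≫ resp A N hN n = 0 := by
  rw [resd, Category.assoc, incl_resp, Limits.comp_zero]

lemma resd_comp (n : ℕ) : resd A N hN (n+1) ≫ resd A N hN n = 0 := by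
  rw [resd, resd, Category.assoc, ← Category.assoc (incl A N hN (n+1)), incl_resp,
    Limits.zero_comp, Limits.comp_zero]

def resComplex : ChainComplex (ModuleCat.{0} A) ℕ :=
  ChainComplex.of (resF A N hN) (resd A N hN) (resd_comp A N hN)

lemma range_resd (n : ℕ) :
    LinearMap.range (resd A N hN n).hom = LinearMap.ker (resp A N hN n).hom := by
  show LinearMap.range ((incl A N hN n).hom.comp (resp A N hN (n+1)).hom) = _
  rw [LinearMap.range_comp, LinearMap.range_eq_top.mpr (resp_surj A N hN (n+1)),
    Submodule.map_top]
  exact Submodule.range_subtype _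

lemma ker_resd (n : ℕ) :
    LinearMap.ker (resd A N hN n).hom = LinearMap.ker (resp A N hN (n+1)).hom := by
  show LinearMap.ker ((incl A N hN n).hom.comp (resp A N hN (n+1)).hom) = _
  rw [LinearMap.ker_comp]
  show Submodule.comap _ (LinearMap.ker (LinearMap.ker (resp A N hN n).hom).subtype) = _
  rw [Submodule.ker_subtype]
  exact Submodule.comap_bot _

def resProjRes : ProjectiveResolution N where
  complex := resComplex A N hN
  π := (ChainComplex.toSingle₀Equiv _ _).symm ⟨resp A N hN 0, by
    rw [show (resComplex A N hN).d 1 0 = resd A N hN 0 from ChainComplex.of_d (resF A N hN) (resd A N hN) 0]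
    exact resd_resp A N hN 0⟩
  projective n := resF_proj A N hN n
  quasiIso := ⟨fun n => by
    cases n with
    | zero =>
      rw [ChainComplex.quasiIsoAt₀_iff, ShortComplex.quasiIso_iff_of_zeros']
      · have hex : (ShortComplex.mk (resd A N hN 0) (resp A N hN 0)
            (resd_resp A N hN 0)).Exact := by
          rw [ShortComplex.moduleCat_exact_iff_range_eq_ker]
          exact range_resd A N hN 0
        have hepi : Epi (ShortComplex.mk (resd A N hN 0) (resp A N hN 0)
            (resd_resp A N hN 0)).g :=
          (ModuleCat.epi_iff_surjective _).2 (resp_surj A N hN 0)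
        refine (ShortComplex.exact_and_epi_g_iff_of_iso ?_).2 ⟨hex, hepi⟩
        refine ShortComplex.isoMk (Iso.refl _) (Iso.refl _) (Iso.refl _) ?_ ?_
        · simp [show (resComplex A N hN).d 1 0 = resd A N hN 0 from ChainComplex.of_d (resF A N hN) (resd A N hN) 0]
          exact (Category.id_comp _).trans (Category.comp_id _).symm
        · simp [ChainComplex.toSingle₀Equiv]
          rfl
      all_goals rfl
    | succ n =>
      rw [quasiIsoAt_iff_exactAt']
      · rw [HomologicalComplex.exactAt_iff' _ (n + 1 + 1) (n + 1) n (by simp) (by simp)]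
        rw [ShortComplex.moduleCat_exact_iff_range_eq_ker]
        show LinearMap.range ((resComplex A N hN).d (n+2) (n+1)).hom =
          LinearMap.ker ((resComplex A N hN).d (n+1) n).hom
        rw [show (resComplex A N hN).d (n+2) (n+1) = resd A N hN (n+1) from
            ChainComplex.of_d (resF A N hN) (resd A N hN) (n+1),
          show (resComplex A N hN).d (n+1) n = resd A N hN n from
            ChainComplex.of_d (resF A N hN) (resd A N hN) n]
        exact (range_resd A N hN (n+1)).trans (ker_resd A N hN n).symm
      · apply ChainComplex.exactAt_succ_single_obj⟩

lemma resProjRes_X_fin (n : ℕ) : Module.Finite A ((resProjRes A N hN).complex.X n) :=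
  resF_fin A N hN n

end Resolution

/-! #### Concrete homology classes -/

section HCLS

variable {R : Type} [Ring R]

lemma mc_comp_apply {X Y Z : ModuleCat.{0} R} (f : X ⟶ Y) (g : Y ⟶ Z) (x : X) :
    (f ≫ g) x = g (f x) := rfl

variable (S : ShortComplex (ModuleCat.{0} R))

def hcls : ModuleCat.of R (LinearMap.ker S.g.hom) ⟶ S.homology :=
  S.moduleCatCyclesIso.inv ≫ S.homologyπ

lemma hcls_surjective : Function.Surjective (hcls S) := by
  have h1 : Function.Surjective S.homologyπ := by
    rw [← ModuleCat.epi_iff_surjective]; infer_instance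
  have h2 : Function.Surjective S.moduleCatCyclesIso.inv := by
    rw [← ModuleCat.epi_iff_surjective]; infer_instance
  intro y
  obtain ⟨c, hc⟩ := h1 y
  obtain ⟨u, hu⟩ := h2 c
  exact ⟨u, by rw [← hc, ← hu]; rfl⟩

lemma hcls_zero_iff (u : LinearMap.ker S.g.hom) :
    hcls S u = 0 ↔ ∃ x : S.X₁, S.moduleCatToCycles x = u := by
  have hinj : Function.Injective S.moduleCatHomologyIso.inv := by
    rw [← ModuleCat.mono_iff_injective]; infer_instance
  have e : hcls S u = S.moduleCatHomologyIso.inv (S.moduleCatLeftHomologyData.π u) :=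
    ConcreteCategory.congr_hom S.moduleCatCyclesIso_inv_π u
  rw [e]
  constructor
  · intro h0
    have h1 : S.moduleCatLeftHomologyData.π u = 0 := hinj (by rw [h0, map_zero])
    have h1' : (LinearMap.range S.moduleCatToCycles).mkQ u = 0 := h1
    rwa [Submodule.mkQ_apply, Submodule.Quotient.mk_eq_zero] at h1'
  · rintro ⟨x, rfl⟩
    have h1' : (LinearMap.range S.moduleCatToCycles).mkQ (S.moduleCatToCycles x) = 0 := by
      rw [Submodule.mkQ_apply, Submodule.Quotient.mk_eq_zero]
      exact ⟨x, rfl⟩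
    have : S.moduleCatLeftHomologyData.π (S.moduleCatToCycles x) = 0 := h1'
    rw [this, map_zero]

variable {S} {T : ShortComplex (ModuleCat.{0} R)} (φ : S ⟶ T)

lemma hcls_naturality (u : LinearMap.ker S.g.hom) (v : LinearMap.ker T.g.hom)
    (hv : (v : T.X₂) = φ.τ₂ u) :
    ShortComplex.homologyMap φ (hcls S u) = hcls T v := by
  have e1 : ShortComplex.cyclesMap φ (S.moduleCatCyclesIso.inv u) =
      T.moduleCatCyclesIso.inv v := by
    apply (ModuleCat.mono_iff_injective T.iCycles).mp inferInstance
    have l1 : T.iCycles (ShortComplex.cyclesMap φ (S.moduleCatCyclesIso.inv u)) =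
        φ.τ₂ (S.iCycles (S.moduleCatCyclesIso.inv u)) :=
      ConcreteCategory.congr_hom (ShortComplex.cyclesMap_i φ) (S.moduleCatCyclesIso.inv u)
    have l2 : S.iCycles (S.moduleCatCyclesIso.inv u) = (u : S.X₂) :=
      ConcreteCategory.congr_hom S.moduleCatCyclesIso_inv_iCycles u
    have l3 : T.iCycles (T.moduleCatCyclesIso.inv v) = (v : T.X₂) :=
      ConcreteCategory.congr_hom T.moduleCatCyclesIso_inv_iCycles v
    rw [l1, l2, l3, hv]
  have l4 : ShortComplex.homologyMap φ (S.homologyπ (S.moduleCatCyclesIso.inv u)) =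
      T.homologyπ (ShortComplex.cyclesMap φ (S.moduleCatCyclesIso.inv u)) :=
    ConcreteCategory.congr_hom (ShortComplex.homologyπ_naturality φ) (S.moduleCatCyclesIso.inv u)
  exact l4.trans (congrArg (fun c => T.homologyπ c) e1)

end HCLS

/-! #### The short complexes computing Ext -/

section SCSetup

variable {A : Type} [Ring A] {N : ModuleCat.{0} A} (P : ProjectiveResolution N)

abbrev GY (Y : ModuleCat.{0} A) := ((linearYoneda ℤ (ModuleCat.{0} A)).obj Y).rightOp

abbrev KC (Y : ModuleCat.{0} A) : HomologicalComplex (ModuleCat.{0} ℤ)ᵒᵖ (ComplexShape.down ℕ) :=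
  ((GY Y).mapHomologicalComplex _).obj P.complex

abbrev SC (i : ℕ) (Y : ModuleCat.{0} A) : ShortComplex (ModuleCat.{0} ℤ) :=
  ((KC P Y).sc i).unop

def eIso (i : ℕ) (Y : ModuleCat.{0} A) :
    (((Ext ℤ (ModuleCat.{0} A) i).obj (Opposite.op N)).obj Y : ModuleCat.{0} ℤ) ≅
      (SC P i Y).homology :=
  (P.isoLeftDerivedObj (GY Y) i).unop.symm ≪≫ ((SC P i Y).homologyOpIso).unop.symm

def ψmap {Y Y' : ModuleCat.{0} A} (f : Y ⟶ Y') (i : ℕ) : SC P i Y ⟶ SC P i Y' :=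
  ShortComplex.unopMap ((HomologicalComplex.shortComplexFunctor _ _ i).map
    ((NatTrans.mapHomologicalComplex
      (NatTrans.rightOp ((linearYoneda ℤ (ModuleCat.{0} A)).map f)) _).app P.complex))

lemma ext_map_eq {Y Y' : ModuleCat.{0} A} (f : Y ⟶ Y') (i : ℕ) :
    (((Ext ℤ (ModuleCat.{0} A) i).obj (Opposite.op N)).map f) =
      (eIso P i Y).hom ≫ ShortComplex.homologyMap (ψmap P f i) ≫ (eIso P i Y').inv := by
  have h := ProjectiveResolution.leftDerived_app_eq
    (NatTrans.rightOp ((linearYoneda ℤ (ModuleCat.{0} A)).map f)) P i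
  have lhs : (((Ext ℤ (ModuleCat.{0} A) i).obj (Opposite.op N)).map f) =
      ((NatTrans.leftDerived
        (NatTrans.rightOp ((linearYoneda ℤ (ModuleCat.{0} A)).map f)) i).app N).unop := rfl
  set θ := (NatTrans.mapHomologicalComplex (NatTrans.rightOp
      ((linearYoneda ℤ (ModuleCat.{0} A)).map f)) (ComplexShape.down ℕ)).app P.complex with hθ
  have h2 : (HomologicalComplex.homologyFunctor (ModuleCat.{0} ℤ)ᵒᵖ
        (ComplexShape.down ℕ) i).map θ =
      ShortComplex.homologyMap (ShortComplex.opMap (ψmap P f i)) := rfl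
  have h3 := ShortComplex.homologyOpIso_hom_naturality (ψmap P f i)
  have h4 : (HomologicalComplex.homologyFunctor (ModuleCat.{0} ℤ)ᵒᵖ
        (ComplexShape.down ℕ) i).map θ =
      (SC P i Y').homologyOpIso.hom ≫ (ShortComplex.homologyMap (ψmap P f i)).op ≫
        (SC P i Y).homologyOpIso.inv := h2.trans (show
          ShortComplex.homologyMap (ShortComplex.opMap (ψmap P f i)) =
            (SC P i Y').homologyOpIso.hom ≫ (ShortComplex.homologyMap (ψmap P f i)).op ≫
              (SC P i Y).homologyOpIso.inv by
    rw [← cancel_mono (SC P i Y).homologyOpIso.hom, Category.assoc, Category.assoc,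
      Iso.inv_hom_id, Category.comp_id, h3])
  rw [lhs, h, h4]
  simp only [eIso, Iso.trans_hom, Iso.trans_inv, Iso.symm_hom, Iso.symm_inv, Iso.unop_inv,
    Iso.unop_hom, unop_comp, Category.assoc, Quiver.Hom.unop_op]
  rfl

lemma sc_g_apply (i : ℕ) (Y : ModuleCat.{0} A) (z : (SC P i Y).X₂) :
    (SC P i Y).g z = CategoryStruct.comp (P.complex.d ((ComplexShape.down ℕ).prev i) i)
      (show P.complex.X i ⟶ Y from z) := rfl

lemma sc_f_apply (i : ℕ) (Y : ModuleCat.{0} A) (b : (SC P i Y).X₁) :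
    (SC P i Y).f b = CategoryStruct.comp (P.complex.d i ((ComplexShape.down ℕ).next i))
      (show P.complex.X ((ComplexShape.down ℕ).next i) ⟶ Y from b) := rfl

lemma ψmap_τ₂_apply (i : ℕ) {Y Y' : ModuleCat.{0} A} (f : Y ⟶ Y') (z : (SC P i Y).X₂) :
    (ψmap P f i).τ₂ z = CategoryStruct.comp (show P.complex.X i ⟶ Y from z) f := rfl

lemma sc_g_comp (i : ℕ) {Y Y' : ModuleCat.{0} A} (f : Y ⟶ Y') (z : (SC P i Y).X₂) :
    (SC P i Y').g (CategoryStruct.comp (show P.complex.X i ⟶ Y from z) f) =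
      CategoryStruct.comp (show P.complex.X ((ComplexShape.down ℕ).prev i) ⟶ Y
        from ((SC P i Y).g z)) f := rfl

lemma sc_f_comp (i : ℕ) {Y Y' : ModuleCat.{0} A} (f : Y ⟶ Y') (b : (SC P i Y).X₁) :
    (SC P i Y').f (CategoryStruct.comp
        (show P.complex.X ((ComplexShape.down ℕ).next i) ⟶ Y from b) f) =
      CategoryStruct.comp (show P.complex.X i ⟶ Y from ((SC P i Y).f b)) f := rfl

end SCSetup

/-! #### The comparison of direct sums -/

section Main

open DirectSum

variable {A : Type} [Ring A] {N : ModuleCat.{0} A} (P : ProjectiveResolution N)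
variable {I : Type} [DecidableEq I] (M : I → ModuleCat.{0} A)

abbrev Dsum : ModuleCat.{0} A := ModuleCat.of A (⨁ α : I, (M α : Type))

abbrev ιh (α : I) : M α ⟶ Dsum M := ModuleCat.ofHom <| DirectSum.lof A I (fun α => (M α : Type)) α

abbrev prh (α : I) : Dsum M ⟶ M α := ModuleCat.ofHom <| DFinsupp.lapply α

variable (i : ℕ)

lemma cycle_comp {Y Y' : ModuleCat.{0} A} (f : Y ⟶ Y') (z : (SC P i Y).X₂)
    (hz : z ∈ LinearMap.ker (SC P i Y).g.hom) :
    (show (SC P i Y').X₂ from CategoryStruct.comp (show P.complex.X i ⟶ Y from z) f) ∈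
      LinearMap.ker (SC P i Y').g.hom := by
  rw [LinearMap.mem_ker] at hz ⊢
  rw [sc_g_comp]
  have h0 : (show P.complex.X ((ComplexShape.down ℕ).prev i) ⟶ Y
      from ((SC P i Y).g z)) = 0 := hz
  rw [h0, Limits.zero_comp]
  rfl

/-- composition of a cycle with a morphism, as a cycle -/
def cyc {Y Y' : ModuleCat.{0} A} (f : Y ⟶ Y') (z : LinearMap.ker (SC P i Y).g.hom) :
    LinearMap.ker (SC P i Y').g.hom :=
  ⟨_, cycle_comp P i f z.1 z.2⟩

lemma hcls_comp {Y Y' : ModuleCat.{0} A} (f : Y ⟶ Y') (z : LinearMap.ker (SC P i Y).g.hom) :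
    ShortComplex.homologyMap (ψmap P f i) (hcls _ z) = hcls _ (cyc P i f z) :=
  hcls_naturality _ _ _ rfl

lemma sum_comp_pr (s : Finset I) (w : ∀ j : I, P.complex.X i ⟶ M j) (β : I) (hβ : β ∈ s) :
    CategoryStruct.comp (∑ j ∈ s, CategoryStruct.comp (w j) (ιh M j)) (prh M β) = w β := by
  apply ModuleCat.hom_ext
  apply LinearMap.ext
  intro p
  show (DFinsupp.lapply (R := A) β)
    ((∑ j ∈ s, CategoryStruct.comp (w j) (ιh M j)).hom p) = w β p
  rw [ModuleCat.hom_sum, LinearMap.sum_apply]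
  have he : ∀ j ∈ s, ((CategoryStruct.comp (w j) (ιh M j) : P.complex.X i ⟶ Dsum M)).hom
      p = DirectSum.of (fun α => (M α : Type)) j (w j p) := by
    intro j _
    show DirectSum.lof A I (fun α => (M α : Type)) j (w j p) = _
    rw [DirectSum.lof_eq_of]
  rw [Finset.sum_congr rfl he]
  show (∑ j ∈ s, DirectSum.of (fun α => (M α : Type)) j (w j p)) β = w β p
  rw [myDS_sum_of_apply, if_pos hβ]

lemma decompose_mor [Module.Finite A (P.complex.X i)] (z : P.complex.X i ⟶ Dsum M) :
    ∃ s : Finset I, z = ∑ j ∈ s,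
      CategoryStruct.comp (CategoryStruct.comp z (prh M j)) (ιh M j) := by
  obtain ⟨s, _, hdec⟩ := myDS_decompose M
    (show (P.complex.X i : Type) →ₗ[A] DirectSum I (fun α => (M α : Type)) from z.hom)
  exact ⟨s, by ext1; rw [ModuleCat.hom_sum]; exact hdec⟩

lemma psi_bijective [hfin : ∀ n, Module.Finite A (P.complex.X n)] :
    Function.Bijective (DirectSum.toAddMonoid (fun α : I =>
      (AddMonoidHom.mk' (fun u => ShortComplex.homologyMap (ψmap P (ιh M α) i) u)
        (fun a b => map_add _ a b))) :
      (⨁ α : I, ((SC P i (M α)).homology : Type)) →+ ((SC P i (Dsum M)).homology : Type)) := by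
  set Ψ := (DirectSum.toAddMonoid (fun α : I =>
      (AddMonoidHom.mk' (fun u => ShortComplex.homologyMap (ψmap P (ιh M α) i) u)
        (fun a b => map_add _ a b))) :
      (⨁ α : I, ((SC P i (M α)).homology : Type)) →+ ((SC P i (Dsum M)).homology : Type)) with hΨ
  constructor
  · rw [injective_iff_map_eq_zero]
    intro x hx
    obtain ⟨s, hs⟩ := myDS_exists_support x
    choose u hu using fun α : I => hcls_surjective (SC P i (M α)) (x α)
    set v : ∀ j : I, (LinearMap.ker (SC P i (Dsum M)).g.hom : Type) := fun j =>
      cyc P i (ιh M j) (u j) with hvdef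
    have hΨx : Ψ x = hcls (SC P i (Dsum M)) (∑ j ∈ s, v j) := by
      conv_lhs => rw [myDS_eq_sum_of x s hs]
      rw [map_sum, map_sum]
      refine Finset.sum_congr rfl fun j hj => ?_
      rw [DirectSum.toAddMonoid_of, ← hu j]
      exact hcls_comp P i (ιh M j) (u j)
    rw [hΨx, hcls_zero_iff] at hx
    obtain ⟨b, hb⟩ := hx
    have hbw : (SC P i (Dsum M)).f b = ((∑ j ∈ s, v j : LinearMap.ker (SC P i (Dsum M)).g.hom) :
        (SC P i (Dsum M)).X₂) := congrArg Subtype.val hb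
    have hwsum : ((∑ j ∈ s, v j : LinearMap.ker (SC P i (Dsum M)).g.hom) :
        (SC P i (Dsum M)).X₂) = ∑ j ∈ s, CategoryStruct.comp
          (show P.complex.X i ⟶ M j from (u j).1) (ιh M j) := by
      rw [AddSubmonoidClass.coe_finset_sum]
      exact Finset.sum_congr rfl fun j _ => rfl
    refine DFinsupp.ext fun β => ?_
    rw [DFinsupp.zero_apply]
    by_cases hβ : β ∈ s
    · rw [← hu β, hcls_zero_iff]
      refine ⟨CategoryStruct.comp
        (show P.complex.X ((ComplexShape.down ℕ).next i) ⟶ Dsum M from b) (prh M β), ?_⟩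
      apply Subtype.ext
      show (SC P i (M β)).f _ = _
      rw [sc_f_comp, hbw, hwsum]
      exact sum_comp_pr P M i s (fun j => (u j).1) β hβ
    · exact hs β hβ
  · intro h
    obtain ⟨⟨z, hz⟩, rfl⟩ := hcls_surjective _ h
    obtain ⟨s, hdec⟩ := decompose_mor P M i (show P.complex.X i ⟶ Dsum M from z)
    set zc : ∀ j : I, (LinearMap.ker (SC P i (M j)).g.hom : Type) := fun j =>
      cyc P i (prh M j) ⟨z, hz⟩ with hzcdef
    refine ⟨∑ j ∈ s, DirectSum.of (fun α => ((SC P i (M α)).homology : Type)) j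
      (hcls _ (zc j)), ?_⟩
    rw [map_sum]
    have he : ∀ j ∈ s, Ψ (DirectSum.of (fun α => ((SC P i (M α)).homology : Type)) j
        (hcls _ (zc j))) = hcls _ (cyc P i (ιh M j) (zc j)) := by
      intro j _
      rw [hΨ, DirectSum.toAddMonoid_of]
      exact hcls_comp P i (ιh M j) (zc j)
    rw [Finset.sum_congr rfl he, ← map_sum]
    congr 1
    apply Subtype.ext
    rw [AddSubmonoidClass.coe_finset_sum]
    exact hdec.symm

end Main

end ExtDirectSumAux

open DirectSum in
/-- Over a left noetherian ring `A`, if `N` is a finitely generated left `A`-module and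
`(M α)` is a family of left `A`-modules of uniformly bounded injective dimension, then for
every `i ≥ 0` the natural map `⊕ Ext^i(N, M α) → Ext^i(N, ⊕ M α)` is an isomorphism. -/
theorem ext_directSum (A : Type) [Ring A] [IsNoetherianRing A]
    (N : ModuleCat.{0} A) [Module.Finite A N]
    {I : Type} [DecidableEq I] (M : I → ModuleCat.{0} A) (n : ℕ)
    (h : ∀ α : I, injDim A (M α) ≤ (n : ℕ∞)) (i : ℕ) :
    Function.Bijective
      (DirectSum.toAddMonoid
        (fun α : I =>
          (AddMonoidHom.mk'
            (fun x => (((Ext ℤ (ModuleCat.{0} A) i).obj (Opposite.op N)).map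
              (show M α ⟶ ModuleCat.of A (⨁ α : I, (M α : Type)) from
                ModuleCat.ofHom (DirectSum.lof A I (fun α => (M α : Type)) α))) x)
            (fun x y => map_add _ x y) :
            extType A i N (M α) →+
              extType A i N (ModuleCat.of A (⨁ α : I, (M α : Type)))))) := by
  classical
  have hN : Module.Finite A N := inferInstance
  set P : ProjectiveResolution N := resProjRes A N hN with hPdef
  haveI hfin : ∀ m : ℕ, Module.Finite A (P.complex.X m) := resProjRes_X_fin A N hN
  set Φ := (DirectSum.toAddMonoid
        (fun α : I =>
          (AddMonoidHom.mk'
            (fun x => (((Ext ℤ (ModuleCat.{0} A) i).obj (Opposite.op N)).map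
              (show M α ⟶ ModuleCat.of A (⨁ α : I, (M α : Type)) from
                ModuleCat.ofHom (DirectSum.lof A I (fun α => (M α : Type)) α))) x)
            (fun x y => map_add _ x y) :
            extType A i N (M α) →+
              extType A i N (ModuleCat.of A (⨁ α : I, (M α : Type)))))) with hΦdef
  let e : ∀ Y : ModuleCat.{0} A,
      (((Ext ℤ (ModuleCat.{0} A) i).obj (Opposite.op N)).obj Y : Type) ≃+
        ((SC P i Y).homology : Type) := fun Y =>
    { toFun := (eIso P i Y).hom
      invFun := (eIso P i Y).inv
      left_inv := fun x => by rw [← mc_comp_apply, Iso.hom_inv_id]; rfl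
      right_inv := fun x => by rw [← mc_comp_apply, Iso.inv_hom_id]; rfl
      map_add' := fun a b => map_add _ a b }
  set Ψ := (DirectSum.toAddMonoid (fun α : I =>
      (AddMonoidHom.mk' (fun u => ShortComplex.homologyMap (ψmap P (ιh M α) i) u)
        (fun a b => map_add _ a b))) :
      (⨁ α : I, ((SC P i (M α)).homology : Type)) →+ ((SC P i (Dsum M)).homology : Type)) with hΨdef
  set G := (DirectSum.toAddMonoid (fun α : I =>
      (DirectSum.of (fun β : I => ((SC P i (M β)).homology : Type)) α).comp
        (e (M α)).toAddMonoidHom) :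
      (⨁ α : I, (((Ext ℤ (ModuleCat.{0} A) i).obj (Opposite.op N)).obj (M α) : Type)) →+
        (⨁ α : I, ((SC P i (M α)).homology : Type))) with hGdef
  set G' := (DirectSum.toAddMonoid (fun α : I =>
      (DirectSum.of (fun β : I =>
          (((Ext ℤ (ModuleCat.{0} A) i).obj (Opposite.op N)).obj (M β) : Type)) α).comp
        (e (M α)).symm.toAddMonoidHom) :
      (⨁ α : I, ((SC P i (M α)).homology : Type)) →+
        (⨁ α : I, (((Ext ℤ (ModuleCat.{0} A) i).obj (Opposite.op N)).obj (M α) : Type))) with hG'def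
  have hGG' : ∀ y, G (G' y) = y := by
    have hc : G.comp G' = AddMonoidHom.id _ := by
      refine DirectSum.addHom_ext fun α z => ?_
      rw [AddMonoidHom.comp_apply, hG'def, DirectSum.toAddMonoid_of, AddMonoidHom.comp_apply,
        hGdef, DirectSum.toAddMonoid_of, AddMonoidHom.comp_apply, AddMonoidHom.id_apply]
      rw [AddEquiv.coe_toAddMonoidHom, AddEquiv.coe_toAddMonoidHom, AddEquiv.apply_symm_apply]
    intro y
    calc G (G' y) = (G.comp G') y := rfl
    _ = y := by rw [hc]; rfl
  have hG'G : ∀ y, G' (G y) = y := by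
    have hc : G'.comp G = AddMonoidHom.id _ := by
      refine DirectSum.addHom_ext fun α z => ?_
      rw [AddMonoidHom.comp_apply, hGdef, DirectSum.toAddMonoid_of, AddMonoidHom.comp_apply,
        hG'def, DirectSum.toAddMonoid_of, AddMonoidHom.comp_apply, AddMonoidHom.id_apply]
      rw [AddEquiv.coe_toAddMonoidHom, AddEquiv.coe_toAddMonoidHom, AddEquiv.symm_apply_apply]
    intro y
    calc G' (G y) = (G'.comp G) y := rfl
    _ = y := by rw [hc]; rfl
  have hGbij : Function.Bijective G :=
    Function.bijective_iff_has_inverse.mpr ⟨G', hG'G, hGG'⟩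
  have key : ∀ (α : I) (x : extType A i N (M α)),
      (eIso P i (Dsum M)).hom ((((Ext ℤ (ModuleCat.{0} A) i).obj (Opposite.op N)).map
          (ιh M α)) x) =
        ShortComplex.homologyMap (ψmap P (ιh M α) i) ((eIso P i (M α)).hom x) := by
    intro α x
    rw [ext_map_eq P (ιh M α) i]
    show (eIso P i (Dsum M)).hom ((eIso P i (Dsum M)).inv
      (ShortComplex.homologyMap (ψmap P (ιh M α) i) ((eIso P i (M α)).hom x))) = _
    rw [← mc_comp_apply, Iso.inv_hom_id]
    rfl
  have hcomm : (e (Dsum M)).toAddMonoidHom.comp Φ = Ψ.comp G := by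
    refine DirectSum.addHom_ext fun α x => ?_
    rw [AddMonoidHom.comp_apply, AddMonoidHom.comp_apply, hΦdef, DirectSum.toAddMonoid_of,
      hGdef, DirectSum.toAddMonoid_of, AddMonoidHom.comp_apply, hΨdef, DirectSum.toAddMonoid_of]
    rw [AddMonoidHom.mk'_apply]
    exact key α x
  have hfun : ⇑Φ = ⇑(e (Dsum M)).symm ∘ ⇑Ψ ∘ ⇑G := by
    funext x
    have h1 : (e (Dsum M)) (Φ x) = Ψ (G x) := DFunLike.congr_fun hcomm x
    rw [Function.comp_apply, Function.comp_apply, ← h1, AddEquiv.symm_apply_apply]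
  rw [hfun]
  exact (e (Dsum M)).symm.bijective.comp ((psi_bijective P M i).comp hGbij)
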